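/- Let f : ℝ^d → ℝ be convex, differentiable, and L-smooth for some L > 0, and let (θ_t) be gradient descent iterates θ_{t+1} = θ_t − η ∇f(θ_t) with constant step size η ∈ (0, 1/L]. Fix an integer T ≥ 1 and set λ_T := 1/(ηT). Then for every z ∈ ℝ^d, inf_{w ∈ ℝ^d} ( f(w) + (λ_T/4)‖θ_0 − w‖₂² ) ≤ f(θ_T) + (λ_T/4)‖θ_0 − θ_T‖₂² ≤ f(z) + λ_T ‖θ_0 − z‖₂². -/

import Mathlib

open Finset

open InnerProductSpace RealInnerProductSpace

section Aux

variable {E : Type*} [NormedAddCommGroup E] [InnerProductSpace ℝ E] [CompleteSpace E]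

lemma line_hasDerivAt (f : E → ℝ) (hdiff : Differentiable ℝ f) (x v : E) (t : ℝ) :
    HasDerivAt (fun s : ℝ => f (x + s • v)) ⟪gradient f (x + t • v), v⟫_ℝ t := by
  have hc : HasDerivAt (fun s : ℝ => x + s • v) v t := by
    simpa using ((hasDerivAt_id t).smul_const v).const_add x
  have hf : HasFDerivAt f (toDual ℝ E (gradient f (x + t • v))) (x + t • v) :=
    hasGradientAt_iff_hasFDerivAt.mp (hdiff _).hasGradientAt
  have h := hf.comp_hasDerivAt t hc
  exact h

lemma convex_grad_ineq (f : E → ℝ) (hconv : ConvexOn ℝ Set.univ f)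
    (hdiff : Differentiable ℝ f) (x y : E) :
    f x + ⟪gradient f x, y - x⟫_ℝ ≤ f y := by
  set g : ℝ → ℝ := fun s => f (x + s • (y - x)) with hg
  have hgconv : ConvexOn ℝ Set.univ g := by
    have := hconv.comp_affineMap (AffineMap.lineMap x y : ℝ →ᵃ[ℝ] E)
    rw [Set.preimage_univ] at this
    refine this.congr fun s _ => ?_
    symm
    show f (x + s • (y - x)) = f (AffineMap.lineMap x y s)
    rw [AffineMap.lineMap_apply_module]
    congr 1
    module
  have hd := line_hasDerivAt f hdiff x (y - x) 0
  have hslope := hgconv.le_slope_of_hasDerivAt (Set.mem_univ (0:ℝ)) (Set.mem_univ (1:ℝ))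
    one_pos hd
  have h0 : g 0 = f x := by simp [g]
  have h1 : g 1 = f y := by simp [g]
  rw [slope_def_field] at hslope
  simp only [h0, h1, zero_smul, add_zero] at hslope ⊢
  have : (f y - f x) / (1 - 0) = f y - f x := by ring
  rw [this] at hslope
  linarith

lemma descent_lemma (f : E → ℝ) (L : ℝ) (hdiff : Differentiable ℝ f)
    (hsmooth : ∀ x y : E, ‖gradient f x - gradient f y‖ ≤ L * ‖x - y‖) (x y : E) :
    f y ≤ f x + ⟪gradient f x, y - x⟫_ℝ + L / 2 * ‖y - x‖ ^ 2 := by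
  set v := y - x with hv
  set ψ : ℝ → ℝ := fun t => f (x + t • v) - t * ⟪gradient f x, v⟫_ℝ - L * t ^ 2 / 2 * ‖v‖ ^ 2
    with hψ
  have hder : ∀ t : ℝ, HasDerivAt ψ
      (⟪gradient f (x + t • v), v⟫_ℝ - ⟪gradient f x, v⟫_ℝ - L * t * ‖v‖ ^ 2) t := by
    intro t
    have h1 := line_hasDerivAt f hdiff x v t
    have h2 : HasDerivAt (fun t : ℝ => t * ⟪gradient f x, v⟫_ℝ) ⟪gradient f x, v⟫_ℝ t := by
      simpa using (hasDerivAt_id t).mul_const ⟪gradient f x, v⟫_ℝ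
    have h3 : HasDerivAt (fun t : ℝ => L * t ^ 2 / 2 * ‖v‖ ^ 2) (L * t * ‖v‖ ^ 2) t := by
      have h := (((hasDerivAt_pow 2 t).const_mul L).div_const 2).mul_const (‖v‖ ^ 2)
      refine h.congr_deriv ?_
      push_cast
      ring
    exact (h1.sub h2).sub h3
  have hmono : AntitoneOn ψ (Set.Icc 0 1) := by
    apply antitoneOn_of_deriv_nonpos (convex_Icc 0 1)
    · exact Continuous.continuousOn (by
        exact Differentiable.continuous fun t => (hder t).differentiableAt)
    · intro t ht
      exact (hder t).differentiableAt.differentiableWithinAt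
    · intro t ht
      rw [(hder t).deriv]
      rw [interior_Icc] at ht
      have hb : ⟪gradient f (x + t • v) - gradient f x, v⟫_ℝ ≤ L * t * ‖v‖ ^ 2 := by
        calc ⟪gradient f (x + t • v) - gradient f x, v⟫_ℝ
            ≤ ‖gradient f (x + t • v) - gradient f x‖ * ‖v‖ := real_inner_le_norm _ _
          _ ≤ (L * ‖(x + t • v) - x‖) * ‖v‖ := by
              gcongr
              exact hsmooth _ _
          _ = L * t * ‖v‖ ^ 2 := by
              rw [show (x + t • v) - x = t • v by abel, norm_smul]
              simp [abs_of_pos ht.1, sq]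
              ring
      rw [inner_sub_left] at hb
      linarith
  have := hmono (Set.mem_Icc.mpr ⟨le_refl 0, zero_le_one⟩)
      (Set.mem_Icc.mpr ⟨zero_le_one, le_refl 1⟩) zero_le_one
  simp only [hψ] at this
  simp only [zero_smul, add_zero, one_smul, zero_pow, one_pow] at this
  have hxy : x + v = y := by rw [hv]; abel
  rw [hxy] at this
  norm_num at this
  have hgv : ⟪gradient f x, v⟫_ℝ = fderiv ℝ f x v := by simp
  linarith

lemma gd_step (f : E → ℝ) (L η : ℝ) (hconv : ConvexOn ℝ Set.univ f)
    (hdiff : Differentiable ℝ f)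
    (hsmooth : ∀ x y : E, ‖gradient f x - gradient f y‖ ≤ L * ‖x - y‖)
    (hη1 : 0 < η) (hη2 : L * η ≤ 1) (x z : E) :
    f (x - η • gradient f x) ≤
        f z + (‖x - z‖ ^ 2 - ‖(x - η • gradient f x) - z‖ ^ 2) / (2 * η) ∧
      f (x - η • gradient f x) ≤ f x := by
  set g := gradient f x with hg
  set x' := x - η • g with hx'
  have hdesc := descent_lemma f L hdiff hsmooth x x'
  have hvx : x' - x = -(η • g) := by rw [hx']; abel
  have hinner : ⟪g, x' - x⟫_ℝ = -(η * ‖g‖ ^ 2) := by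
    rw [hvx, inner_neg_right, real_inner_smul_right, real_inner_self_eq_norm_sq]
  have hnorm : ‖x' - x‖ ^ 2 = η ^ 2 * ‖g‖ ^ 2 := by
    rw [hvx, norm_neg, norm_smul, Real.norm_eq_abs, abs_of_pos hη1, mul_pow]
  rw [hinner, hnorm] at hdesc
  have hkey : f x' ≤ f x - η / 2 * ‖g‖ ^ 2 := by
    nlinarith [sq_nonneg ‖g‖, hη1]
  have hconvineq := convex_grad_ineq f hconv hdiff x z
  have hfx : f x ≤ f z + ⟪g, x - z⟫_ℝ := by
    have : ⟪g, z - x⟫_ℝ = -⟪g, x - z⟫_ℝ := by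
      rw [← inner_neg_right]; congr 1; abel
    rw [this] at hconvineq; linarith
  have hsq : ‖x' - z‖ ^ 2 = ‖x - z‖ ^ 2 - 2 * η * ⟪g, x - z⟫_ℝ + η ^ 2 * ‖g‖ ^ 2 := by
    have h1 : x' - z = (x - z) - η • g := by rw [hx']; abel
    rw [h1, norm_sub_sq_real, real_inner_smul_right, norm_smul, Real.norm_eq_abs,
      abs_of_pos hη1, mul_pow, real_inner_comm]
    ring
  constructor
  · have : ⟪g, x - z⟫_ℝ - η / 2 * ‖g‖ ^ 2 = (‖x - z‖ ^ 2 - ‖x' - z‖ ^ 2) / (2 * η) := by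
      rw [hsq]; field_simp; ring
    linarith
  · nlinarith [sq_nonneg ‖g‖, hη1]


end Aux

/-- **Training envelope for gradient descent.**
For convex, differentiable, `L`-smooth `f` and gradient descent iterates with constant step
size `η ∈ (0, 1/L]`, with `λ_T := 1/(ηT)`, the penalized value of the iterate is squeezed
between the minimal value with penalty coefficient `λ_T/4` and, for every `z`, the value
`f z + λ_T ‖θ 0 - z‖²`. -/
theorem gd_training_envelope {d : ℕ} (f : EuclideanSpace ℝ (Fin d) → ℝ) (L : ℝ) (hL : 0 < L)
    (hconv : ConvexOn ℝ Set.univ f) (hdiff : Differentiable ℝ f)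
    (hsmooth : ∀ x y : EuclideanSpace ℝ (Fin d),
      ‖gradient f x - gradient f y‖ ≤ L * ‖x - y‖)
    (η : ℝ) (hη : 0 < η ∧ η ≤ 1 / L)
    (θ : ℕ → EuclideanSpace ℝ (Fin d))
    (hupd : ∀ t, θ (t + 1) = θ t - η • gradient f (θ t))
    (T : ℕ) (hT : 1 ≤ T) (z : EuclideanSpace ℝ (Fin d)) :
    (⨅ w : EuclideanSpace ℝ (Fin d), (f w + (1 / (η * T)) / 4 * ‖θ 0 - w‖ ^ 2)) ≤
        f (θ T) + (1 / (η * T)) / 4 * ‖θ 0 - θ T‖ ^ 2 ∧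
      f (θ T) + (1 / (η * T)) / 4 * ‖θ 0 - θ T‖ ^ 2 ≤
        f z + (1 / (η * T)) * ‖θ 0 - z‖ ^ 2 := by
  obtain ⟨hη1, hη2⟩ := hη
  have hLη : L * η ≤ 1 := by
    have := (le_div_iff₀ hL).mp hη2
    nlinarith
  have hTpos : (0 : ℝ) < T := by exact_mod_cast Nat.lt_of_lt_of_le Nat.zero_lt_one hT
  set lam : ℝ := 1 / (η * T) with hlam
  have hlampos : 0 < lam := by positivity
  have hstep := fun t => gd_step f L η hconv hdiff hsmooth hη1 hLη (θ t) z
  have hstep' : ∀ t, f (θ (t + 1)) ≤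
      f z + (‖θ t - z‖ ^ 2 - ‖θ (t + 1) - z‖ ^ 2) / (2 * η) ∧ f (θ (t + 1)) ≤ f (θ t) := by
    intro t
    rw [hupd t]
    exact hstep t
  set ρ : ℕ → ℝ := fun t => ‖θ t - z‖ ^ 2 / (2 * η) with hρ
  have hstep'' : ∀ t, f (θ (t + 1)) ≤ f z + (ρ t - ρ (t + 1)) := by
    intro t
    have := (hstep' t).1
    rw [sub_div] at this
    exact this
  have htel : ∀ n : ℕ, (n : ℝ) * f (θ n) ≤ (n : ℝ) * f z + (ρ 0 - ρ n) := by
    intro n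
    induction n with
    | zero => simp
    | succ n ih =>
      have h1 := hstep'' n
      have hmono := (hstep' n).2
      have hn : (0 : ℝ) ≤ n := Nat.cast_nonneg n
      have h2 : (n : ℝ) * f (θ (n + 1)) ≤ (n : ℝ) * f (θ n) :=
        mul_le_mul_of_nonneg_left hmono hn
      push_cast
      linarith
  have hTne : (T : ℝ) ≠ 0 := ne_of_gt hTpos
  have hηne : η ≠ 0 := ne_of_gt hη1
  have hkey : f (θ T) ≤ f z + lam / 2 * (‖θ 0 - z‖ ^ 2 - ‖θ T - z‖ ^ 2) := by
    have hfT : f (θ T) ≤ f z + (ρ 0 - ρ T) / T := by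
      calc f (θ T) = ((T : ℝ) * f (θ T)) / T := by field_simp
        _ ≤ ((T : ℝ) * f z + (ρ 0 - ρ T)) / T := by gcongr; exact htel T
        _ = f z + (ρ 0 - ρ T) / T := by rw [add_div, mul_div_cancel_left₀ _ hTne]
    have heq : (ρ 0 - ρ T) / T = lam / 2 * (‖θ 0 - z‖ ^ 2 - ‖θ T - z‖ ^ 2) := by
      simp only [hρ, hlam]
      ring
    rw [heq] at hfT
    exact hfT
  constructor
  · -- infimum is at most the value at θ T
    apply ciInf_le
    set M := ‖gradient f (θ 0)‖ with hM
    refine ⟨f (θ 0) - M ^ 2 / (4 * (lam / 4)), ?_⟩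
    rintro _ ⟨w, rfl⟩
    show f (θ 0) - M ^ 2 / (4 * (lam / 4)) ≤ f w + lam / 4 * ‖θ 0 - w‖ ^ 2
    have hcg := convex_grad_ineq f hconv hdiff (θ 0) w
    have hip : -(M * ‖w - θ 0‖) ≤ ⟪gradient f (θ 0), w - θ 0⟫_ℝ := by
      have := abs_real_inner_le_norm (gradient f (θ 0)) (w - θ 0)
      have h2 := neg_abs_le ⟪gradient f (θ 0), w - θ 0⟫_ℝ
      linarith
    have hrev : ‖θ 0 - w‖ = ‖w - θ 0‖ := norm_sub_rev _ _
    have hc4 : 0 < lam / 4 := by positivity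
    rw [hrev]
    have hdiv : (4 * (lam / 4)) * (M ^ 2 / (4 * (lam / 4))) = M ^ 2 := by
      field_simp
    nlinarith [sq_nonneg (2 * (lam / 4) * ‖w - θ 0‖ - M), norm_nonneg (w - θ 0), hc4, hdiv,
      hcg, hip]
  · have htri : ‖θ 0 - θ T‖ ≤ ‖θ 0 - z‖ + ‖θ T - z‖ := by
      calc ‖θ 0 - θ T‖ ≤ ‖θ 0 - z‖ + ‖z - θ T‖ := norm_sub_le_norm_sub_add_norm_sub _ _ _
        _ = ‖θ 0 - z‖ + ‖θ T - z‖ := by rw [norm_sub_rev z]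
    have hDsq : ‖θ 0 - θ T‖ ^ 2 ≤ (‖θ 0 - z‖ + ‖θ T - z‖) ^ 2 := by
      have h0 := norm_nonneg (θ 0 - θ T)
      nlinarith
    nlinarith [hkey, hDsq, hlampos, sq_nonneg (‖θ 0 - z‖ - ‖θ T - z‖)]
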